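/- If M is a maximal matching in G such that no edge of M has both endpoints adjacent to unmatched vertices, then M has no augmenting path of length 3, and hence |M| ≥ (2/3)|M*| for any matching M* of G. -/

import Mathlib

/-- A matching: a set of edges of `G` that are pairwise vertex-disjoint. -/
def IsMatching {V : Type*} (G : SimpleGraph V) (M : Finset (Sym2 V)) : Prop :=
  (∀ e ∈ M, e ∈ G.edgeSet) ∧
  (∀ e ∈ M, ∀ f ∈ M, e ≠ f → ∀ x : V, x ∈ e → x ∉ f)

/-- `v` is unmatched by `M`. -/
def Unmatched {V : Type*} (M : Finset (Sym2 V)) (v : V) : Prop := ∀ e ∈ M, v ∉ e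

/-- If `M` is a maximal matching in `G` such that no edge of `M` has both endpoints
adjacent to (distinct) unmatched vertices, then `M` has no augmenting path of length 3,
and hence `|M| ≥ (2/3)|M*|`, i.e. `2|M*| ≤ 3|M|`, for any matching `M*` of `G`. -/
theorem stmt6 {V : Type*} [Fintype V] [DecidableEq V] (G : SimpleGraph V)
    (M : Finset (Sym2 V)) (hM : IsMatching G M)
    (hmax : ∀ e ∈ G.edgeSet, ∃ x : V, x ∈ e ∧ ¬ Unmatched M x)
    (hno : ¬ ∃ w w' u z : V, s(w, w') ∈ M ∧ Unmatched M u ∧ Unmatched M z ∧ u ≠ z ∧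
        G.Adj u w ∧ G.Adj w' z) :
    (¬ ∃ (u v : V) (p : G.Walk u v), u ≠ v ∧ Unmatched M u ∧ Unmatched M v ∧
        p.IsPath ∧ List.Chain' (fun e f => (e ∈ M) ↔ (f ∉ M)) p.edges ∧ p.length = 3)
    ∧ (∀ M' : Finset (Sym2 V), IsMatching G M' → 2 * M'.card ≤ 3 * M.card) := by
  classical
  constructor
  · rintro ⟨u, v, p, hne, hu, hv, hpath, hchain, hlen⟩
    cases p with
    | nil => simp at hlen
    | cons h1 p =>
      cases p with
      | nil => simp at hlen
      | cons h2 p =>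
        cases p with
        | nil => simp at hlen
        | cons h3 p =>
          cases p with
          | cons h4 p => simp [SimpleGraph.Walk.length_cons] at hlen
          | nil =>
            rename_i a b
            simp only [SimpleGraph.Walk.edges_cons, SimpleGraph.Walk.edges_nil,
              List.isChain_cons_cons, List.isChain_singleton, and_true] at hchain
            have he1 : s(u, a) ∉ M := fun h => hu _ h (by simp)
            have he2 : s(a, b) ∈ M := by
              by_contra h
              exact he1 ((List.rel_of_isChain_cons_cons hchain).mpr h)
            exact hno ⟨a, b, u, v, he2, hu, hv, hne, h1, h3⟩
  · intro M' hM'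
    -- weight of an M'-edge: 2 if it has an unmatched endpoint, else 1
    set w : Sym2 V → ℕ := fun e' => if ∃ x ∈ e', Unmatched M x then 2 else 1 with hw
    -- vertex weight: weight of the M'-edge containing x (0 if none)
    set vw : V → ℕ := fun x => ∑ e' ∈ M', if x ∈ e' then w e' else 0 with hvw
    -- m x = number of M-edges containing x (0 or 1)
    set m : V → ℕ := fun x => (M.filter (fun f => x ∈ f)).card with hm
    have hw_def : ∀ e', w e' = if ∃ x ∈ e', Unmatched M x then 2 else 1 := fun _ => rfl
    have hvw_def : ∀ x, vw x = ∑ e' ∈ M', if x ∈ e' then w e' else 0 := fun _ => rfl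
    have hm_def : ∀ x, m x = (M.filter (fun f => x ∈ f)).card := fun _ => rfl
    have hm1 : ∀ x, m x ≤ 1 := by
      intro x
      apply Finset.card_le_one.mpr
      intro e he f hf
      simp only [Finset.mem_filter] at he hf
      by_contra hef
      exact hM.2 e he.1 f hf.1 hef x he.2 hf.2
    have hm_matched : ∀ x, ¬ Unmatched M x → 1 ≤ m x := by
      intro x hx
      simp only [Unmatched, not_forall] at hx
      obtain ⟨e, he, hxe⟩ := hx
      have : e ∈ M.filter (fun f => x ∈ f) := Finset.mem_filter.mpr ⟨he, not_not.mp hxe⟩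
      exact Finset.card_pos.mpr ⟨e, this⟩
    have hunm : ∀ x f, f ∈ M → x ∈ f → ¬ Unmatched M x := fun x f hf hxf hun => hun f hf hxf
    -- the value of vw
    have hvw_eq : ∀ x, vw x = 0 ∨ ∃ e' ∈ M', x ∈ e' ∧ vw x = w e' := by
      intro x
      by_cases h : ∃ e' ∈ M', x ∈ e'
      · obtain ⟨e0, he0, hxe0⟩ := h
        right
        refine ⟨e0, he0, hxe0, ?_⟩
        rw [hvw_def]
        rw [Finset.sum_eq_single_of_mem e0 he0]
        · rw [if_pos hxe0]
        · intro e' he' hne'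
          rw [if_neg]
          intro hxe'
          exact hM'.2 e' he' e0 he0 hne' x hxe' hxe0
      · left
        rw [hvw_def]
        apply Finset.sum_eq_zero
        intro e' he'
        rw [if_neg (fun hx => h ⟨e', he', hx⟩)]
    have hw2 : ∀ e', w e' ≤ 2 := by
      intro e'; rw [hw_def]; split <;> omega
    have hvw2 : ∀ x, vw x ≤ 2 := by
      intro x
      rcases hvw_eq x with h | ⟨e', _, _, h⟩ <;> rw [h]
      · omega
      · exact hw2 e'
    -- if vw x = 2 then x is in a bad M'-edge
    have hvw_bad : ∀ x, 2 ≤ vw x → ∃ e' ∈ M', x ∈ e' ∧ ∃ y ∈ e', Unmatched M y := by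
      intro x hx
      rcases hvw_eq x with h | ⟨e', he', hxe', h⟩
      · omega
      · refine ⟨e', he', hxe', ?_⟩
        rw [h, hw_def] at hx
        by_contra hb
        rw [if_neg hb] at hx
        omega
    -- Key lemma A: each M-edge has total vertex weight ≤ 3
    have hA : ∀ f ∈ M, (∑ x : V, if x ∈ f then vw x else 0) ≤ 3 := by
      intro f hf
      have hfE : f ∈ G.edgeSet := hM.1 f hf
      revert hf hfE
      induction f using Sym2.ind with
      | _ a b =>
        intro hf hfE
        have hab : a ≠ b := (G.mem_edgeSet.mp hfE).ne
        have hsum : (∑ x : V, if x ∈ s(a, b) then vw x else 0) = vw a + vw b := by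
          rw [← Finset.sum_filter]
          have : Finset.univ.filter (fun x => x ∈ s(a, b)) = {a, b} := by
            ext x
            simp [Sym2.mem_iff]
          rw [this, Finset.sum_pair hab]
        rw [hsum]
        by_contra hlt
        have ha2 : 2 ≤ vw a := by have := hvw2 b; omega
        have hb2 : 2 ≤ vw b := by have := hvw2 a; omega
        obtain ⟨e1, he1, hae1, u0, hu0e1, hu0⟩ := hvw_bad a ha2
        obtain ⟨e2, he2, hbe2, z0, hz0e2, hz0⟩ := hvw_bad b hb2
        have hau : u0 ≠ a := fun h => hunm a s(a,b) hf (by simp) (h ▸ hu0)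
        have hbz : z0 ≠ b := fun h => hunm b s(a,b) hf (by simp) (h ▸ hz0)
        have he1eq : e1 = s(a, u0) := (Sym2.mem_and_mem_iff (Ne.symm hau)).mp ⟨hae1, hu0e1⟩
        have he2eq : e2 = s(b, z0) := (Sym2.mem_and_mem_iff (Ne.symm hbz)).mp ⟨hbe2, hz0e2⟩
        have hadj1 : G.Adj a u0 := G.mem_edgeSet.mp (he1eq ▸ hM'.1 e1 he1)
        have hadj2 : G.Adj b z0 := G.mem_edgeSet.mp (he2eq ▸ hM'.1 e2 he2)
        have hene : e1 ≠ e2 := by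
          intro h
          rw [he1eq, he2eq] at h
          have : b ∈ s(a, u0) := h ▸ (by simp : b ∈ s(b, z0))
          rcases Sym2.mem_iff.mp this with h' | h'
          · exact hab h'.symm
          · exact hunm b s(a,b) hf (by simp) (h' ▸ hu0)
        have huz : u0 ≠ z0 := by
          intro h
          exact hM'.2 e1 he1 e2 he2 hene u0 hu0e1 (h ▸ hz0e2)
        exact hno ⟨a, b, u0, z0, hf, hu0, hz0, huz, hadj1.symm, hadj2⟩
    -- Key lemma B: each M'-edge gets weight ≥ 2 from matched vertices
    have hB : ∀ e' ∈ M', 2 ≤ w e' * (∑ x : V, if x ∈ e' then m x else 0) := by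
      intro e' he'
      have he'E : e' ∈ G.edgeSet := hM'.1 e' he'
      have hx := hmax e' he'E
      revert he'E hx
      induction e' using Sym2.ind with
      | _ p q =>
        intro he'E hx
        have hpq : p ≠ q := (G.mem_edgeSet.mp he'E).ne
        have hsum : (∑ x : V, if x ∈ s(p, q) then m x else 0) = m p + m q := by
          rw [← Finset.sum_filter]
          have : Finset.univ.filter (fun x => x ∈ s(p, q)) = {p, q} := by
            ext x
            simp [Sym2.mem_iff]
          rw [this, Finset.sum_pair hpq]
        rw [hsum, hw_def]
        obtain ⟨x, hxe, hxm⟩ := hx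
        have hmx : 1 ≤ m x := hm_matched x hxm
        split
        · have : 1 ≤ m p + m q := by
            rcases Sym2.mem_iff.mp hxe with h | h <;> subst h <;> omega
          omega
        · next hb =>
          push_neg at hb
          have hp : 1 ≤ m p := hm_matched p (hb p (by simp))
          have hq : 1 ≤ m q := hm_matched q (hb q (by simp))
          omega
    -- assemble
    calc 2 * M'.card = ∑ _e' ∈ M', 2 := by rw [Finset.sum_const, smul_eq_mul, mul_comm]
      _ ≤ ∑ e' ∈ M', w e' * (∑ x : V, if x ∈ e' then m x else 0) := Finset.sum_le_sum hB
      _ = ∑ e' ∈ M', ∑ x : V, (if x ∈ e' then m x * w e' else 0) := by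
          apply Finset.sum_congr rfl
          intro e' _
          rw [Finset.mul_sum]
          apply Finset.sum_congr rfl
          intro x _
          by_cases hc : x ∈ e' <;> simp [hc, mul_comm]
      _ = ∑ x : V, ∑ e' ∈ M', (if x ∈ e' then m x * w e' else 0) := Finset.sum_comm
      _ = ∑ x : V, m x * vw x := by
          apply Finset.sum_congr rfl
          intro x _
          rw [hvw_def, Finset.mul_sum]
          apply Finset.sum_congr rfl
          intro e' _
          by_cases hc : x ∈ e' <;> simp [hc]
      _ = ∑ x : V, ∑ f ∈ M, (if x ∈ f then vw x else 0) := by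
          apply Finset.sum_congr rfl
          intro x _
          rw [← Finset.sum_filter, Finset.sum_const, smul_eq_mul, hm_def]
      _ = ∑ f ∈ M, ∑ x : V, (if x ∈ f then vw x else 0) := Finset.sum_comm
      _ ≤ ∑ _f ∈ M, 3 := Finset.sum_le_sum hA
      _ = 3 * M.card := by rw [Finset.sum_const, smul_eq_mul, mul_comm]
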